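/- arXiv:2301.06537 — 2 statements merged into one kernel-verified Lean document; each statement's English description precedes it below -/
import Mathlib

section
/- Let N ≥ 1, s ∈ (0,1), p ∈ (1,∞), with s < 2(p−1)/p if p < 2, and let u ∈ C^{1,1}(ℝ^N). Then the function x ↦ (−Δ)^s_p u(x) is bounded and continuous on ℝ^N. -/
open MeasureTheory Metric

/-- The normalizing constant `C_{N,s,p}` of the fractional `p`-Laplacian. -/
noncomputable def CNsp (N : ℕ) (s p : ℝ) : ℝ :=
  (s * p / 2) * (1 - s) * 2 ^ (2 * s - 1) / Real.pi ^ (((N : ℝ) - 1) / 2) *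
    (Real.Gamma (((N : ℝ) + s * p) / 2) / Real.Gamma ((p + 1) / 2)) * Real.Gamma (2 - s)

/-- The fractional `p`-Laplacian of a `C^{1,1}` function, via the absolutely
convergent symmetrized integral representation. -/
noncomputable def fracPLap (N : ℕ) (s p : ℝ) (u : EuclideanSpace ℝ (Fin N) → ℝ)
    (x : EuclideanSpace ℝ (Fin N)) : ℝ :=
  CNsp N s p * (1 / 2) *
    ∫ z : EuclideanSpace ℝ (Fin N),
      (|u x - u (x + z)| ^ (p - 2) * (u x - u (x + z)) +
          |u x - u (x - z)| ^ (p - 2) * (u x - u (x - z))) / ‖z‖ ^ ((N : ℝ) + s * p)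


-- subadditivity, q ≤ 1
theorem aux_rpow_sub_le {q a c : ℝ} (hq0 : 0 ≤ q) (hq1 : q ≤ 1) (hc : 0 ≤ c) (hca : c ≤ a) :
    a ^ q - c ^ q ≤ (a - c) ^ q := by
  have ha : 0 ≤ a := hc.trans hca
  have hac : 0 ≤ a - c := sub_nonneg.2 hca
  have h := NNReal.rpow_add_le_add_rpow (a - c).toNNReal c.toNNReal hq0 hq1
  have h2 : (((a - c).toNNReal + c.toNNReal : NNReal) : ℝ) = a := by
    push_cast [Real.coe_toNNReal _ hac, Real.coe_toNNReal _ hc]; ring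
  have h3 := NNReal.coe_le_coe.2 h
  rw [NNReal.coe_add] at h3
  rw [NNReal.coe_rpow, NNReal.coe_rpow, NNReal.coe_rpow] at h3
  rw [show ((a-c).toNNReal + c.toNNReal : NNReal) = (a.toNNReal) from ?_] at h3
  · rw [Real.coe_toNNReal _ ha, Real.coe_toNNReal _ hac, Real.coe_toNNReal _ hc] at h3
    linarith
  · have := h2
    apply NNReal.coe_injective
    rw [h2, Real.coe_toNNReal _ ha]

-- MVT bound, q ≥ 1
theorem aux_rpow_sub_le' {q a c : ℝ} (hq : 1 ≤ q) (hc : 0 ≤ c) (hca : c ≤ a) :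
    a ^ q - c ^ q ≤ q * a ^ (q - 1) * (a - c) := by
  have ha : 0 ≤ a := hc.trans hca
  have key : ‖a ^ q - c ^ q‖ ≤ q * a ^ (q-1) * ‖a - c‖ := by
    apply Convex.norm_image_sub_le_of_norm_hasDerivWithin_le
      (f := fun t : ℝ => t ^ q) (f' := fun t : ℝ => q * t ^ (q - 1)) (s := Set.Icc c a)
    · intro t ht
      exact (Real.hasDerivAt_rpow_const (Or.inr hq)).hasDerivWithinAt
    · intro t ht
      rw [Real.norm_eq_abs, abs_mul, abs_of_nonneg (by linarith : (0:ℝ) ≤ q),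
        abs_of_nonneg (Real.rpow_nonneg (hc.trans ht.1) _)]
      have : t ^ (q-1) ≤ a ^ (q-1) := Real.rpow_le_rpow (hc.trans ht.1) ht.2 (by linarith)
      nlinarith
    · exact convex_Icc c a
    · exact ⟨le_rfl, hca⟩
    · exact ⟨hca, le_rfl⟩
  rw [Real.norm_eq_abs, Real.norm_eq_abs, abs_of_nonneg (sub_nonneg.2 hca)] at key
  calc a ^ q - c ^ q ≤ |a ^ q - c ^ q| := le_abs_self _
    _ ≤ _ := key

theorem aux_abs_phi {p : ℝ} (hp : 1 < p) (t : ℝ) : |(|t| ^ (p - 2) * t)| = |t| ^ (p - 1) := by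
  rcases eq_or_ne t 0 with rfl | ht
  · simp [Real.zero_rpow (by linarith : p - 1 ≠ 0)]
  · have h : (0:ℝ) < |t| := abs_pos.2 ht
    rw [abs_mul, abs_of_nonneg (Real.rpow_nonneg (abs_nonneg t) _),
      show p - 1 = (p - 2) + 1 by ring, Real.rpow_add_one h.ne']

theorem aux_phi_cont {p : ℝ} (hp : 1 < p) : Continuous fun t : ℝ => |t| ^ (p - 2) * t := by
  rw [continuous_iff_continuousAt]
  intro t
  rcases eq_or_ne t 0 with rfl | ht
  · have h0 : |(|(0:ℝ)| ^ (p - 2) * (0:ℝ))| = 0 := by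
      rw [aux_abs_phi hp]; simp [Real.zero_rpow (by linarith : p - 1 ≠ 0)]
    rw [ContinuousAt]
    rw [show |(0:ℝ)| ^ (p-2) * (0:ℝ) = 0 by simpa using abs_eq_zero.mp h0]
    apply squeeze_zero_norm (fun s => by rw [Real.norm_eq_abs, aux_abs_phi hp])
    have : ContinuousAt (fun s : ℝ => |s| ^ (p-1)) 0 := by
      apply ContinuousAt.comp (g := fun v : ℝ => v ^ (p-1)) _ continuous_abs.continuousAt
      simpa using Real.continuousAt_rpow_const _ _ (Or.inr (by linarith : (0:ℝ) ≤ p - 1))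
    simpa [Real.zero_rpow (by linarith : p - 1 ≠ 0)] using this.tendsto
  · apply ContinuousAt.mul _ continuousAt_id
    apply ContinuousAt.comp (g := fun v : ℝ => v ^ (p-2)) _ continuous_abs.continuousAt
    exact Real.continuousAt_rpow_const _ _ (Or.inl (abs_ne_zero.2 ht))

theorem aux_phi_nonneg {p : ℝ} (hp : 1 < p) {t : ℝ} (ht : 0 ≤ t) : |t| ^ (p - 2) * t = t ^ (p - 1) := by
  rcases eq_or_ne t 0 with rfl | h
  · simp [Real.zero_rpow (by linarith : p - 1 ≠ 0)]
  · rw [abs_of_nonneg ht, show p - 1 = (p - 2) + 1 by ring, Real.rpow_add_one h]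

theorem aux_phi_neg {p : ℝ} (t : ℝ) : |(-t)| ^ (p - 2) * (-t) = -(|t| ^ (p - 2) * t) := by
  rw [abs_neg]; ring

-- mixed-sign helper, q ≤ 1
theorem aux_mixed {q a c : ℝ} (hq0 : 0 ≤ q) (hq1 : q ≤ 1) (ha : 0 ≤ a) (hc : 0 ≤ c) :
    |a ^ q - c ^ q| ≤ |a - c| ^ q := by
  rcases le_total c a with h | h
  · rw [abs_of_nonneg (sub_nonneg.2 (Real.rpow_le_rpow hc h hq0)),
      abs_of_nonneg (sub_nonneg.2 h)]
    exact aux_rpow_sub_le hq0 hq1 hc h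
  · rw [abs_sub_comm, abs_of_nonneg (sub_nonneg.2 (Real.rpow_le_rpow ha h hq0)),
      abs_sub_comm, abs_of_nonneg (sub_nonneg.2 h)]
    exact aux_rpow_sub_le hq0 hq1 ha h

-- E1 : case p ≤ 2
theorem aux_E1 {p : ℝ} (hp : 1 < p) (hp2 : p ≤ 2) (a b : ℝ) :
    |(|a| ^ (p - 2) * a) + (|b| ^ (p - 2) * b)| ≤ 2 * |a + b| ^ (p - 1) := by
  have hq0 : (0:ℝ) ≤ p - 1 := by linarith
  have hq1 : p - 1 ≤ 1 := by linarith
  have key : ∀ x y : ℝ, 0 ≤ x → 0 ≤ y →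
      |(|x| ^ (p - 2) * x) + (|y| ^ (p - 2) * y)| ≤ 2 * |x + y| ^ (p - 1) := by
    intro x y hx hy
    rw [aux_phi_nonneg hp hx, aux_phi_nonneg hp hy, abs_of_nonneg (by positivity),
      abs_of_nonneg (by linarith)]
    have h1 : x ^ (p-1) ≤ (x + y) ^ (p-1) := Real.rpow_le_rpow hx (by linarith) hq0
    have h2 : y ^ (p-1) ≤ (x + y) ^ (p-1) := Real.rpow_le_rpow hy (by linarith) hq0
    linarith
  have keym : ∀ x y : ℝ, 0 ≤ x → y ≤ 0 →
      |(|x| ^ (p - 2) * x) + (|y| ^ (p - 2) * y)| ≤ 2 * |x + y| ^ (p - 1) := by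
    intro x y hx hy
    have h1 : (|y| ^ (p - 2) * y) = -((-y) ^ (p-1)) := by
      have h := aux_phi_neg (p := p) (-y)
      simp only [neg_neg] at h
      rw [h, aux_phi_nonneg hp (by linarith : (0:ℝ) ≤ -y)]
    rw [h1, aux_phi_nonneg hp hx]
    have := aux_mixed hq0 hq1 hx (by linarith : (0:ℝ) ≤ -y)
    have h3 : |x - -y| = |x + y| := by rw [show x - -y = x + y by ring]
    rw [h3] at this
    calc |x ^ (p-1) + -(-y) ^ (p-1)| = |x ^ (p-1) - (-y) ^ (p-1)| := by ring_nf
      _ ≤ |x + y| ^ (p-1) := this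
      _ ≤ 2 * |x + y| ^ (p-1) := by
          have : (0:ℝ) ≤ |x + y| ^ (p-1) := Real.rpow_nonneg (abs_nonneg _) _
          linarith
  rcases le_total 0 a with ha | ha <;> rcases le_total 0 b with hb | hb
  · exact key a b ha hb
  · exact keym a b ha hb
  · rw [add_comm ((|a| ^ (p - 2) * a)), add_comm a b]; exact keym b a hb ha
  · have h1 := key (-a) (-b) (by linarith) (by linarith)
    rw [aux_phi_neg, aux_phi_neg, show -a + -b = -(a+b) by ring, abs_neg,
      show -(|a| ^ (p - 2) * a) + -(|b| ^ (p - 2) * b)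
        = -((|a| ^ (p - 2) * a) + (|b| ^ (p - 2) * b)) by ring, abs_neg] at h1
    exact h1

-- E2 : case p ≥ 2
theorem aux_E2 {p : ℝ} (hp : 1 < p) (hp2 : 2 ≤ p) (a b : ℝ) :
    |(|a| ^ (p - 2) * a) + (|b| ^ (p - 2) * b)| ≤
      (p + 2) * (max |a| |b|) ^ (p - 2) * |a + b| := by
  have hq : (1:ℝ) ≤ p - 1 := by linarith
  have key : ∀ x y : ℝ, 0 ≤ x → 0 ≤ y →
      |(|x| ^ (p - 2) * x) + (|y| ^ (p - 2) * y)| ≤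
        (p + 2) * (max |x| |y|) ^ (p - 2) * |x + y| := by
    intro x y hx hy
    rw [aux_phi_nonneg hp hx, aux_phi_nonneg hp hy, abs_of_nonneg hx, abs_of_nonneg hy,
      abs_of_nonneg (show (0:ℝ) ≤ x ^ (p-1) + y ^ (p-1) by positivity),
      abs_of_nonneg (by linarith : (0:ℝ) ≤ x + y)]
    set M := max x y with hM
    have hM0 : 0 ≤ M := le_max_of_le_left hx
    rcases eq_or_lt_of_le hM0 with h0 | h0
    · have hx0 : x = 0 := le_antisymm (le_trans (le_max_left x y) h0.ge) hx
      have hy0 : y = 0 := le_antisymm (le_trans (le_max_right x y) h0.ge) hy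
      subst hx0; subst hy0
      simp [Real.zero_rpow (by linarith : p - 1 ≠ 0)]
    · have h1 : x ^ (p-1) ≤ M ^ (p-1) := Real.rpow_le_rpow hx (le_max_left x y) (by linarith)
      have h2 : y ^ (p-1) ≤ M ^ (p-1) := Real.rpow_le_rpow hy (le_max_right x y) (by linarith)
      have h3 : M ^ (p-1) = M ^ (p-2) * M := by
        rw [show p - 1 = (p-2) + 1 by ring, Real.rpow_add_one h0.ne']
      have h4 : M ≤ x + y := by rcases max_cases x y with ⟨h,_⟩|⟨h,_⟩ <;> rw [hM, h] <;> linarith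
      have h5 : (0:ℝ) ≤ M ^ (p-2) := Real.rpow_nonneg hM0 _
      have h7 := mul_le_mul_of_nonneg_left h4 h5
      have h8 : (0:ℝ) ≤ M ^ (p-2) * (x + y) := mul_nonneg h5 (by linarith)
      nlinarith [h7, h8]
  have keym : ∀ x y : ℝ, 0 ≤ x → y ≤ 0 →
      |(|x| ^ (p - 2) * x) + (|y| ^ (p - 2) * y)| ≤
        (p + 2) * (max |x| |y|) ^ (p - 2) * |x + y| := by
    intro x y hx hy
    have hY : (0:ℝ) ≤ -y := by linarith
    have h1 : (|y| ^ (p - 2) * y) = -((-y) ^ (p-1)) := by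
      have h := aux_phi_neg (p := p) (-y)
      simp only [neg_neg] at h
      rw [h, aux_phi_nonneg hp hY]
    rw [h1, aux_phi_nonneg hp hx, abs_of_nonneg hx, abs_of_nonpos hy]
    rcases le_total (-y) x with h | h
    · have hmax : max x (-y) = x := max_eq_left h
      have h2 := aux_rpow_sub_le' hq hY h
      rw [show p - 1 - 1 = p - 2 by ring] at h2
      have habs : |x + y| = x - -y := by rw [abs_of_nonneg (by linarith)]; ring
      rw [hmax, habs]
      have h5 : (0:ℝ) ≤ x ^ (p-2) := Real.rpow_nonneg hx _
      have h6 : (-y) ^ (p-1) ≤ x ^ (p-1) := Real.rpow_le_rpow hY h (by linarith)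
      rw [abs_of_nonneg (by linarith : (0:ℝ) ≤ x ^ (p-1) + -(-y) ^ (p-1))]
      nlinarith
    · have hmax : max x (-y) = -y := max_eq_right h
      have h2 := aux_rpow_sub_le' hq hx h
      rw [show p - 1 - 1 = p - 2 by ring] at h2
      have habs : |x + y| = -y - x := by rw [abs_of_nonpos (by linarith)]; ring
      rw [hmax, habs]
      have h5 : (0:ℝ) ≤ (-y) ^ (p-2) := Real.rpow_nonneg hY _
      have h6 : x ^ (p-1) ≤ (-y) ^ (p-1) := Real.rpow_le_rpow hx h (by linarith)
      rw [abs_of_nonpos (by linarith : x ^ (p-1) + -(-y) ^ (p-1) ≤ 0)]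
      nlinarith
  rcases le_total 0 a with ha | ha <;> rcases le_total 0 b with hb | hb
  · exact key a b ha hb
  · exact keym a b ha hb
  · rw [add_comm ((|a| ^ (p - 2) * a)), add_comm a b, max_comm]; exact keym b a hb ha
  · have h1 := key (-a) (-b) (by linarith) (by linarith)
    rw [aux_phi_neg, aux_phi_neg, show -a + -b = -(a+b) by ring, abs_neg, abs_neg, abs_neg,
      show -(|a| ^ (p - 2) * a) + -(|b| ^ (p - 2) * b)
        = -((|a| ^ (p - 2) * a) + (|b| ^ (p - 2) * b)) by ring, abs_neg] at h1
    exact h1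

theorem aux_fderiv_inner (u : EuclideanSpace ℝ (Fin N) → ℝ) (y v : EuclideanSpace ℝ (Fin N)) :
    fderiv ℝ u y v = inner ℝ (gradient u y) v := by
  rw [gradient, InnerProductSpace.toDual_symm_apply]

theorem aux_norm_fderiv (u : EuclideanSpace ℝ (Fin N) → ℝ) (y : EuclideanSpace ℝ (Fin N)) :
    ‖fderiv ℝ u y‖ = ‖gradient u y‖ := by
  rw [gradient, LinearIsometryEquiv.norm_map]

theorem aux_lip (u : EuclideanSpace ℝ (Fin N) → ℝ) (hu : ContDiff ℝ 1 u)
    (Mg : ℝ) (hMg : ∀ x, ‖gradient u x‖ ≤ Mg) (x y : EuclideanSpace ℝ (Fin N)) :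
    |u x - u y| ≤ Mg * ‖x - y‖ := by
  have := Convex.norm_image_sub_le_of_norm_fderiv_le
    (fun w _ => (hu.differentiable one_ne_zero).differentiableAt)
    (fun w _ => by rw [aux_norm_fderiv]; exact hMg w) convex_univ (Set.mem_univ y) (Set.mem_univ x)
  simpa [Real.norm_eq_abs] using this

theorem aux_second_diff (u : EuclideanSpace ℝ (Fin N) → ℝ) (hu : ContDiff ℝ 1 u)
    (K : NNReal) (hK : LipschitzWith K (gradient u)) (x z : EuclideanSpace ℝ (Fin N)) :
    |(u x - u (x + z)) + (u x - u (x - z))| ≤ 2 * K * ‖z‖ ^ (2:ℕ) := by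
  set G : ℝ → ℝ := fun t => u (x + t • z) + u (x - t • z) with hG
  have hdiff := hu.differentiable one_ne_zero
  have hG' : ∀ t : ℝ, HasDerivAt G
      (fderiv ℝ u (x + t • z) z - fderiv ℝ u (x - t • z) z) t := by
    intro t
    have h1 : HasDerivAt (fun t : ℝ => x + t • z) z t := by
      simpa using ((hasDerivAt_id t).smul_const z).const_add x
    have h2 : HasDerivAt (fun t : ℝ => x - t • z) (-z) t := by
      simpa [sub_eq_add_neg] using ((hasDerivAt_id t).smul_const z).neg.const_add x
    have H1 := (hdiff (x + t • z)).hasFDerivAt.comp_hasDerivAt t h1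
    have H2 := (hdiff (x - t • z)).hasFDerivAt.comp_hasDerivAt t h2
    have := H1.add H2
    rw [map_neg, ← sub_eq_add_neg] at this
    exact this
  have key : ‖G 1 - G 0‖ ≤ 2 * K * ‖z‖ ^ (2:ℕ) * ‖(1:ℝ) - 0‖ := by
    apply Convex.norm_image_sub_le_of_norm_hasDerivWithin_le
      (f' := fun t => fderiv ℝ u (x + t • z) z - fderiv ℝ u (x - t • z) z)
      (fun t _ => (hG' t).hasDerivWithinAt) ?_ (convex_Icc 0 1) ⟨le_rfl, zero_le_one⟩
      ⟨zero_le_one, le_rfl⟩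
    intro t ht
    rw [aux_fderiv_inner, aux_fderiv_inner, ← inner_sub_left]
    calc ‖(inner ℝ (gradient u (x + t • z) - gradient u (x - t • z)) z : ℝ)‖
        ≤ ‖gradient u (x + t • z) - gradient u (x - t • z)‖ * ‖z‖ := norm_inner_le_norm _ _
      _ ≤ (K * ‖(x + t • z) - (x - t • z)‖) * ‖z‖ := by
          apply mul_le_mul_of_nonneg_right _ (norm_nonneg _)
          simpa [dist_eq_norm] using hK.dist_le_mul (x + t • z) (x - t • z)
      _ ≤ 2 * K * ‖z‖ ^ (2:ℕ) := by
          have : ‖(x + t • z) - (x - t • z)‖ = |2 * t| * ‖z‖ := by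
            rw [show (x + t • z) - (x - t • z) = (2 * t) • z by module, norm_smul,
              Real.norm_eq_abs]
          rw [this, abs_mul]
          have ht2 : |t| ≤ 1 := by rw [abs_of_nonneg ht.1]; exact ht.2
          have : (0:ℝ) ≤ K := K.2
          have hz := norm_nonneg z
          rw [abs_of_nonneg (by norm_num : (0:ℝ) ≤ 2), pow_two]
          nlinarith [mul_le_mul_of_nonneg_left ht2 (mul_nonneg (mul_nonneg this hz) hz)]
  have hG1 : G 1 - G 0 = -((u x - u (x + z)) + (u x - u (x - z))) := by
    simp [hG]; ring
  rw [hG1, norm_neg, Real.norm_eq_abs] at key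
  simpa using key

theorem aux_meas_rpow (c : ℝ) : Measurable fun t : ℝ => t ^ c := by measurability

theorem aux_int_compl {N : ℕ} (c : ℝ) (hc : (N:ℝ) < c) :
    IntegrableOn (fun z : EuclideanSpace ℝ (Fin N) => ‖z‖ ^ (-c)) (ball 0 1)ᶜ volume := by
  have hfr : (Module.finrank ℝ (EuclideanSpace ℝ (Fin N)) : ℝ) < c := by
    rwa [finrank_euclideanSpace_fin]
  have hg : Integrable (fun z : EuclideanSpace ℝ (Fin N) => (2:ℝ)^c * (1 + ‖z‖) ^ (-c)) volume :=
    (integrable_one_add_norm hfr).const_mul _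
  apply Integrable.mono' hg.restrict
  · exact ((by measurability : Measurable fun z : EuclideanSpace ℝ (Fin N) => ‖z‖ ^ (-c))).aestronglyMeasurable
  · filter_upwards [ae_restrict_mem measurableSet_ball.compl] with z hz
    have h1 : (1:ℝ) ≤ ‖z‖ := by
      simpa [dist_eq_norm] using hz
    have hz0 : (0:ℝ) < ‖z‖ := by linarith
    rw [Real.norm_eq_abs, abs_of_nonneg (Real.rpow_nonneg (norm_nonneg _) _)]
    have h2 : (1 + ‖z‖) / 2 ≤ ‖z‖ := by linarith
    have h3 : ‖z‖ ^ (-c) ≤ ((1 + ‖z‖)/2) ^ (-c) :=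
      Real.rpow_le_rpow_of_nonpos (by linarith) h2 (by linarith)
    calc ‖z‖ ^ (-c) ≤ ((1 + ‖z‖)/2) ^ (-c) := h3
      _ = (2:ℝ)^c * (1 + ‖z‖) ^ (-c) := by
          rw [Real.div_rpow (by linarith) (by norm_num), Real.rpow_neg (by norm_num : (0:ℝ) ≤ 2)]
          rw [div_eq_mul_inv, inv_inv]; ring

theorem aux_int_ball {N : ℕ} (hN : 1 ≤ N) (r : ℝ) (hr : -(N:ℝ) < r) :
    IntegrableOn (fun z : EuclideanSpace ℝ (Fin N) => ‖z‖ ^ r) (ball 0 1) volume := by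
  have hmeas : Measurable fun z : EuclideanSpace ℝ (Fin N) => ‖z‖ ^ r := by measurability
  rcases le_or_gt 0 r with hr0 | hr0
  · -- r ≥ 0 : bounded on the ball
    apply Measure.integrableOn_of_bounded (M := 1) measure_ball_lt_top.ne
      hmeas.aestronglyMeasurable
    filter_upwards [ae_restrict_mem measurableSet_ball] with z hz
    have h1 : ‖z‖ < 1 := by simpa [dist_eq_norm] using hz
    rw [Real.norm_eq_abs, abs_of_nonneg (Real.rpow_nonneg (norm_nonneg _) _)]
    calc ‖z‖ ^ r ≤ 1 ^ r := Real.rpow_le_rpow (norm_nonneg _) h1.le hr0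
      _ = 1 := Real.one_rpow r
  · -- r < 0 : dyadic decomposition
    haveI : Nonempty (Fin N) := ⟨⟨0, hN⟩⟩
    haveI hnt : Nontrivial (EuclideanSpace ℝ (Fin N)) := by infer_instance
    set E := EuclideanSpace ℝ (Fin N)
    set ρ : ℕ → ℝ := fun k => ((2:ℝ) ^ k)⁻¹ with hρ
    have hρpos : ∀ k, 0 < ρ k := fun k => by positivity
    have hρle : ∀ k, ρ (k+1) ≤ ρ k := fun k => by
      apply inv_anti₀ (by positivity)
      exact pow_le_pow_right₀ (by norm_num) (Nat.le_succ k)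
    set S : ℕ → Set E := fun k => ball 0 (ρ k) \ ball 0 (ρ (k+1)) with hS
    have hSmeas : ∀ k, MeasurableSet (S k) := fun k =>
      measurableSet_ball.diff measurableSet_ball
    -- membership description
    have hmem : ∀ (k : ℕ) (z : E), z ∈ S k ↔ ρ (k+1) ≤ ‖z‖ ∧ ‖z‖ < ρ k := by
      intro k z
      simp [hS, dist_eq_norm, not_lt]
      tauto
    -- the cover
    have hcov : ball (0:E) 1 ⊆ {0} ∪ ⋃ k, S k := by
      intro z hz
      rcases eq_or_ne z 0 with rfl | hz0
      · exact Set.mem_union_left _ rfl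
      · have hzpos : (0:ℝ) < ‖z‖ := norm_pos_iff.2 hz0
        have hz1 : ‖z‖ < 1 := by simpa [dist_eq_norm] using hz
        have hex : ∃ k : ℕ, ρ (k+1) ≤ ‖z‖ := by
          obtain ⟨n, hn⟩ := exists_nat_gt (‖z‖⁻¹)
          refine ⟨n, ?_⟩
          have h2n : (‖z‖⁻¹ : ℝ) < 2 ^ (n+1) := by
            calc (‖z‖⁻¹ : ℝ) < n := hn
              _ ≤ 2 ^ n := by exact_mod_cast Nat.lt_two_pow_self.le
              _ ≤ 2 ^ (n+1) := by
                  apply pow_le_pow_right₀ (by norm_num) (Nat.le_succ n)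
          show ((2:ℝ) ^ (n+1))⁻¹ ≤ ‖z‖
          rw [inv_le_comm₀ (by positivity) hzpos]
          exact h2n.le
        classical
        set k₀ := Nat.find hex with hk₀
        have h1 : ρ (k₀+1) ≤ ‖z‖ := Nat.find_spec hex
        have h2 : ‖z‖ < ρ k₀ := by
          rcases Nat.eq_zero_or_pos k₀ with h | h
          · rw [h]; simpa [hρ] using hz1
          · have := Nat.find_min hex (m := k₀ - 1) (by omega)
            push_neg at this
            rwa [Nat.sub_add_cancel h] at this
        exact Set.mem_union_right _ (Set.mem_iUnion.2 ⟨k₀, (hmem k₀ z).2 ⟨h1, h2⟩⟩)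
    -- integrable on each piece
    have hint : ∀ k, IntegrableOn (fun z : E => ‖z‖ ^ r) (S k) volume := by
      intro k
      apply Measure.integrableOn_of_bounded (M := (ρ (k+1)) ^ r)
        (ne_top_of_le_ne_top measure_ball_lt_top.ne
          (measure_mono (Set.diff_subset))) hmeas.aestronglyMeasurable
      filter_upwards [ae_restrict_mem (hSmeas k)] with z hz
      obtain ⟨h1, _⟩ := (hmem k z).1 hz
      rw [Real.norm_eq_abs, abs_of_nonneg (Real.rpow_nonneg (norm_nonneg _) _)]
      exact Real.rpow_le_rpow_of_nonpos (hρpos (k+1)) h1 hr0.le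
    -- summability of the integrals
    have hsum : Summable fun k : ℕ => ∫ z in S k, ‖(‖z‖ ^ r : ℝ)‖ := by
      set V := (volume (ball (0:E) 1)).toReal with hV
      have hV0 : 0 ≤ V := ENNReal.toReal_nonneg
      set w : ℝ := (2:ℝ) ^ (-(r + N)) with hw
      have hw0 : 0 ≤ w := Real.rpow_nonneg (by norm_num) _
      have hw1 : w < 1 := Real.rpow_lt_one_of_one_lt_of_neg (by norm_num) (by linarith)
      apply Summable.of_nonneg_of_le
        (fun k => integral_nonneg fun z => norm_nonneg _)
        (fun k => ?_) (((summable_geometric_of_lt_one hw0 hw1).mul_left ((2:ℝ) ^ (-r) * V)))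
      -- bound each integral
      have hb : ∀ z ∈ S k, ‖‖(‖z‖ ^ r : ℝ)‖‖ ≤ (ρ (k+1)) ^ r := by
        intro z hz
        obtain ⟨h1, _⟩ := (hmem k z).1 hz
        rw [norm_norm, Real.norm_eq_abs, abs_of_nonneg (Real.rpow_nonneg (norm_nonneg _) _)]
        exact Real.rpow_le_rpow_of_nonpos (hρpos (k+1)) h1 hr0.le
      have hfin : volume (S k) < ⊤ :=
        lt_of_le_of_lt (measure_mono (Set.diff_subset)) measure_ball_lt_top
      have hbd := norm_setIntegral_le_of_norm_le_const (μ := volume) hfin hb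
        (f := fun z : E => ‖(‖z‖ ^ r : ℝ)‖)
      have h2 : ∫ z in S k, ‖(‖z‖ ^ r : ℝ)‖ ≤ (ρ (k+1)) ^ r * (volume (S k)).toReal :=
        le_trans (le_abs_self _) (by rw [← Real.norm_eq_abs]; exact hbd)
      refine h2.trans ?_
      -- volume bound
      have hpow : ∀ (m : ℕ) (e : ℝ), (((2:ℝ) ^ m)⁻¹) ^ e = (2:ℝ) ^ (-(m:ℝ) * e) := by
        intro m e
        rw [← Real.rpow_natCast 2 m, ← Real.rpow_neg (by norm_num), ← Real.rpow_mul (by norm_num),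
          neg_mul]
      have hvol : (volume (S k)).toReal ≤ (ρ k) ^ N * V := by
        have : volume (S k) ≤ volume (ball (0:E) (ρ k)) := measure_mono Set.diff_subset
        have h4 : volume (ball (0:E) (ρ k)) =
            ENNReal.ofReal ((ρ k) ^ N) * volume (ball (0:E) 1) := by
          have := Measure.addHaar_ball (μ := (volume : Measure E)) 0 (hρpos k).le
          rwa [finrank_euclideanSpace_fin] at this
        calc (volume (S k)).toReal ≤ (volume (ball (0:E) (ρ k))).toReal := by
              apply ENNReal.toReal_mono _ this
              rw [h4]
              exact (ENNReal.mul_lt_top ENNReal.ofReal_lt_top measure_ball_lt_top).ne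
          _ = (ρ k) ^ N * V := by
              rw [h4, ENNReal.toReal_mul, ENNReal.toReal_ofReal (by positivity)]
      have hρr : (ρ (k+1)) ^ r = (2:ℝ) ^ (-((k:ℝ)+1) * r) := by
        show (((2:ℝ) ^ (k+1))⁻¹) ^ r = _
        rw [hpow (k+1) r]
        push_cast
        ring_nf
      have hρN : (ρ k) ^ N = (2:ℝ) ^ (-(k:ℝ) * N) := by
        show (((2:ℝ) ^ k)⁻¹) ^ (N:ℕ) = _
        rw [← Real.rpow_natCast (((2:ℝ) ^ k)⁻¹) N, hpow k N]
      calc (ρ (k+1)) ^ r * (volume (S k)).toReal ≤ (ρ (k+1)) ^ r * ((ρ k) ^ N * V) := by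
            apply mul_le_mul_of_nonneg_left hvol (Real.rpow_nonneg (hρpos _).le _)
        _ = (2:ℝ) ^ (-r) * V * w ^ k := by
            rw [hρr, hρN, hw, ← Real.rpow_natCast ((2:ℝ) ^ (-(r + (N:ℝ)))) k,
              ← Real.rpow_mul (by norm_num)]
            have harith : -((k:ℝ) + 1) * r + -(k:ℝ) * N = -r + -(r + (N:ℝ)) * k := by ring
            calc (2:ℝ) ^ (-((k:ℝ)+1) * r) * ((2:ℝ) ^ (-(k:ℝ) * N) * V)
                = ((2:ℝ) ^ (-((k:ℝ)+1)*r) * (2:ℝ) ^ (-(k:ℝ)*N)) * V := by ring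
              _ = (2:ℝ) ^ (-((k:ℝ)+1)*r + -(k:ℝ)*N) * V := by
                  rw [← Real.rpow_add (by norm_num : (0:ℝ) < 2)]
              _ = (2:ℝ) ^ (-r + -(r+(N:ℝ))*k) * V := by rw [harith]
              _ = ((2:ℝ) ^ (-r) * (2:ℝ) ^ (-(r+(N:ℝ))*k)) * V := by
                  rw [Real.rpow_add (by norm_num : (0:ℝ) < 2)]
              _ = (2:ℝ) ^ (-r) * V * (2:ℝ) ^ (-(r+(N:ℝ)) * (k:ℝ)) := by ring
    -- assemble
    have hui : IntegrableOn (fun z : E => ‖z‖ ^ r) (⋃ k, S k) volume :=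
      integrableOn_iUnion_of_summable_integral_norm hint hsum
    have h0 : IntegrableOn (fun z : E => ‖z‖ ^ r) {0} volume := by
      unfold IntegrableOn
      rw [Measure.restrict_eq_zero.2 (measure_singleton 0)]
      exact integrable_zero_measure
    exact ((h0.union hui).mono_set hcov)

/-- For `u ∈ C^{1,1}(ℝ^N)` (with `s < 2(p-1)/p` when `p < 2`), the function
`x ↦ (−Δ)^s_p u (x)` is bounded and continuous on `ℝ^N`. -/
theorem fracPLap_bounded_continuous
    (N : ℕ) (hN : 1 ≤ N) (s p : ℝ) (hs : s ∈ Set.Ioo (0 : ℝ) 1) (hp : 1 < p)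
    (hsp : p < 2 → s < 2 * (p - 1) / p)
    (u : EuclideanSpace ℝ (Fin N) → ℝ)
    (hu : ContDiff ℝ 1 u)
    (Mu : ℝ) (hMu : ∀ x, |u x| ≤ Mu)
    (Mg : ℝ) (hMg : ∀ x, ‖gradient u x‖ ≤ Mg)
    (K : NNReal) (hK : LipschitzWith K (gradient u)) :
    Continuous (fracPLap N s p u) ∧ ∃ M : ℝ, ∀ x, |fracPLap N s p u x| ≤ M := by
  obtain ⟨hs0, hs1⟩ := hs
  have hcu : Continuous u := hu.continuous
  have hp0 : (0:ℝ) < p := by linarith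
  have hMu0 : 0 ≤ Mu := (abs_nonneg _).trans (hMu 0)
  have hMg0 : 0 ≤ Mg := (norm_nonneg _).trans (hMg 0)
  have hK0 : (0:ℝ) ≤ K := K.2
  set c : ℝ := (N:ℝ) + s * p with hcdef
  set β : ℝ := min p (2 * (p - 1)) with hβdef
  have hc : (N:ℝ) < c := by nlinarith
  have hβsp : s * p < β := by
    have h1 : s * p < p := by nlinarith
    have h2 : s * p < 2 * (p - 1) := by
      rcases lt_or_ge p 2 with h | h
      · have h3 := hsp h
        calc s * p < (2 * (p - 1) / p) * p := mul_lt_mul_of_pos_right h3 hp0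
          _ = 2 * (p - 1) := by field_simp
      · nlinarith
    exact lt_min h1 h2
  have hβc : -(N:ℝ) < β - c := by simp only [hcdef]; linarith
  set C₁ : ℝ := max ((p + 2) * Mg ^ (p - 2) * (2 * K)) (2 * (2 * (K:ℝ)) ^ (p - 1)) with hC₁def
  set C₂ : ℝ := 2 * (2 * Mu) ^ (p - 1) with hC₂def
  have hC₁0 : 0 ≤ C₁ :=
    le_max_of_le_right (by positivity)
  have hC₂0 : 0 ≤ C₂ := by positivity
  set g : EuclideanSpace ℝ (Fin N) → ℝ := fun z => if ‖z‖ < 1 then C₁ * ‖z‖ ^ (β - c) else C₂ * ‖z‖ ^ (-c) with hgdef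
  have hg0 : ∀ z, 0 ≤ g z := by
    intro z
    rw [hgdef]
    dsimp only
    split_ifs
    · exact mul_nonneg hC₁0 (Real.rpow_nonneg (norm_nonneg _) _)
    · exact mul_nonneg hC₂0 (Real.rpow_nonneg (norm_nonneg _) _)
  -- integrability of the dominating function
  have hg_int : Integrable g volume := by
    rw [← integrableOn_univ, ← Set.union_compl_self (ball (0:EuclideanSpace ℝ (Fin N)) 1)]
    apply IntegrableOn.union
    · refine IntegrableOn.congr_fun ((aux_int_ball hN (β - c) hβc).const_mul C₁)
        (fun z hz => ?_) measurableSet_ball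
      have h1 : ‖z‖ < 1 := by simpa [dist_eq_norm] using hz
      rw [hgdef]
      simp only [h1, if_true]
    · refine IntegrableOn.congr_fun ((aux_int_compl c hc).const_mul C₂)
        (fun z hz => ?_) measurableSet_ball.compl
      have h1 : ¬ (‖z‖ < 1) := by
        simp only [Set.mem_compl_iff, mem_ball, dist_eq_norm, sub_zero, not_lt] at hz
        linarith
      rw [hgdef]
      simp only [h1, if_false]
  -- the pointwise bound
  have hFbound : ∀ x z : EuclideanSpace ℝ (Fin N),
      |(|u x - u (x + z)| ^ (p - 2) * (u x - u (x + z)) +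
          |u x - u (x - z)| ^ (p - 2) * (u x - u (x - z))) / ‖z‖ ^ ((N : ℝ) + s * p)| ≤ g z := by
    intro x z
    rcases eq_or_ne z 0 with rfl | hz0
    · have h1 : u x - u (x + 0) = 0 := by rw [add_zero, sub_self]
      have h2 : u x - u (x - 0) = 0 := by rw [sub_zero, sub_self]
      rw [h1, h2]
      simp only [abs_zero, mul_zero, add_zero, zero_div, abs_zero]
      exact hg0 0
    · have hzpos : (0:ℝ) < ‖z‖ := norm_pos_iff.2 hz0
      have hD : (0:ℝ) < ‖z‖ ^ c := Real.rpow_pos_of_pos hzpos c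
      set a : ℝ := u x - u (x + z) with hadef
      set b : ℝ := u x - u (x - z) with hbdef
      set num : ℝ := |a| ^ (p - 2) * a + |b| ^ (p - 2) * b with hnumdef
      have ha_lip : |a| ≤ Mg * ‖z‖ := by
        have := aux_lip u hu Mg hMg x (x + z)
        rwa [show x - (x + z) = -z by abel, norm_neg] at this
      have hb_lip : |b| ≤ Mg * ‖z‖ := by
        have := aux_lip u hu Mg hMg x (x - z)
        rwa [show x - (x - z) = z by abel] at this
      have hab : |a + b| ≤ 2 * K * ‖z‖ ^ (2:ℕ) := aux_second_diff u hu K hK x z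
      have habs_eq : |num / ‖z‖ ^ c| = |num| / ‖z‖ ^ c := by
        rw [abs_div, abs_of_nonneg hD.le]
      rcases lt_or_ge (‖z‖) 1 with hz1 | hz1
      · -- small z
        have hgz : g z = C₁ * ‖z‖ ^ (β - c) := by rw [hgdef]; dsimp only; rw [if_pos hz1]
        have key : ∀ A α : ℝ, 0 ≤ A → A ≤ C₁ → β ≤ α → |num| ≤ A * ‖z‖ ^ α →
            |num / ‖z‖ ^ c| ≤ g z := by
          intro A α hA0 hAC hβα hb
          rw [habs_eq, hgz]
          have h1 : |num| / ‖z‖ ^ c ≤ (A * ‖z‖ ^ α) / ‖z‖ ^ c := by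
            apply div_le_div_of_nonneg_right hb hD.le
          refine h1.trans ?_
          rw [mul_div_assoc, ← Real.rpow_sub hzpos]
          apply mul_le_mul hAC _ (Real.rpow_nonneg (norm_nonneg _) _) hC₁0
          exact Real.rpow_le_rpow_of_exponent_ge hzpos hz1.le (by linarith)
        rcases le_total p 2 with hp2 | hp2
        · -- p ≤ 2
          apply key (2 * (2 * (K:ℝ)) ^ (p - 1)) (2 * (p - 1)) (by positivity)
            (le_max_right _ _) (min_le_right _ _)
          have h1 : |num| ≤ 2 * |a + b| ^ (p - 1) := aux_E1 hp hp2 a b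
          have h2 : |a + b| ^ (p - 1) ≤ (2 * K * ‖z‖ ^ (2:ℕ)) ^ (p - 1) :=
            Real.rpow_le_rpow (abs_nonneg _) hab (by linarith)
          have h3 : (2 * (K:ℝ) * ‖z‖ ^ (2:ℕ)) ^ (p - 1)
              = (2 * (K:ℝ)) ^ (p - 1) * ‖z‖ ^ (2 * (p - 1)) := by
            rw [Real.mul_rpow (by positivity) (by positivity), ← Real.rpow_natCast ‖z‖ 2,
              ← Real.rpow_mul (norm_nonneg _)]
            norm_num
          calc |num| ≤ 2 * |a + b| ^ (p - 1) := h1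
            _ ≤ 2 * ((2 * K * ‖z‖ ^ (2:ℕ)) ^ (p - 1)) := by linarith
            _ = 2 * (2 * (K:ℝ)) ^ (p - 1) * ‖z‖ ^ (2 * (p - 1)) := by rw [h3]; ring
        · -- p ≥ 2
          apply key ((p + 2) * Mg ^ (p - 2) * (2 * K)) p (by positivity)
            (le_max_left _ _) (min_le_left _ _)
          have h1 := aux_E2 hp hp2 a b
          have hM : max |a| |b| ≤ Mg * ‖z‖ := max_le ha_lip hb_lip
          have h2 : (max |a| |b|) ^ (p - 2) ≤ (Mg * ‖z‖) ^ (p - 2) :=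
            Real.rpow_le_rpow (le_max_of_le_left (abs_nonneg _)) hM (by linarith)
          have h3 : (Mg * ‖z‖) ^ (p - 2) = Mg ^ (p - 2) * ‖z‖ ^ (p - 2) :=
            Real.mul_rpow hMg0 (norm_nonneg _)
          have h4 : ‖z‖ ^ (p - 2) * ‖z‖ ^ (2:ℕ) = ‖z‖ ^ p := by
            rw [← Real.rpow_natCast ‖z‖ 2, ← Real.rpow_add hzpos]
            norm_num
          have h5 : (0:ℝ) ≤ (p + 2) := by linarith
          calc |num| ≤ (p + 2) * (max |a| |b|) ^ (p - 2) * |a + b| := h1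
            _ ≤ (p + 2) * ((Mg * ‖z‖) ^ (p - 2)) * (2 * K * ‖z‖ ^ (2:ℕ)) := by
                apply mul_le_mul
                · exact mul_le_mul_of_nonneg_left h2 h5
                · exact hab
                · exact abs_nonneg _
                · positivity
            _ = (p + 2) * Mg ^ (p - 2) * (2 * K) * ‖z‖ ^ p := by
                rw [h3, ← h4]; ring
      · -- large z
        have hgz : g z = C₂ * ‖z‖ ^ (-c) := by
          rw [hgdef]; dsimp only; rw [if_neg (not_lt.2 hz1)]
        rw [habs_eq, hgz]
        have h1 : |num| ≤ C₂ := by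
          have ha2 : |a| ≤ 2 * Mu := by
            rw [hadef]
            calc |u x - u (x + z)| ≤ |u x| + |u (x + z)| := abs_sub _ _
              _ ≤ 2 * Mu := by have := hMu x; have := hMu (x + z); linarith
          have hb2 : |b| ≤ 2 * Mu := by
            rw [hbdef]
            calc |u x - u (x - z)| ≤ |u x| + |u (x - z)| := abs_sub _ _
              _ ≤ 2 * Mu := by have := hMu x; have := hMu (x - z); linarith
          calc |num| ≤ |(|a| ^ (p - 2) * a)| + |(|b| ^ (p - 2) * b)| := abs_add_le _ _
            _ = |a| ^ (p - 1) + |b| ^ (p - 1) := by rw [aux_abs_phi hp, aux_abs_phi hp]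
            _ ≤ (2 * Mu) ^ (p - 1) + (2 * Mu) ^ (p - 1) := by
                have := Real.rpow_le_rpow (abs_nonneg a) ha2 (by linarith : (0:ℝ) ≤ p - 1)
                have := Real.rpow_le_rpow (abs_nonneg b) hb2 (by linarith : (0:ℝ) ≤ p - 1)
                linarith
            _ = C₂ := by rw [hC₂def]; ring
        calc |num| / ‖z‖ ^ c ≤ C₂ / ‖z‖ ^ c := div_le_div_of_nonneg_right h1 hD.le
          _ = C₂ * ‖z‖ ^ (-c) := by
              rw [Real.rpow_neg (norm_nonneg _), div_eq_mul_inv]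
  -- measurability in z
  have hF_meas : ∀ x : EuclideanSpace ℝ (Fin N),
      AEStronglyMeasurable (fun z : EuclideanSpace ℝ (Fin N) =>
      (|u x - u (x + z)| ^ (p - 2) * (u x - u (x + z)) +
          |u x - u (x - z)| ^ (p - 2) * (u x - u (x - z))) / ‖z‖ ^ ((N : ℝ) + s * p))
      volume := by
    intro x
    apply Measurable.aestronglyMeasurable
    apply Measurable.div
    · have h1 : Continuous fun z : EuclideanSpace ℝ (Fin N) => u x - u (x + z) := by fun_prop
      have h2 : Continuous fun z : EuclideanSpace ℝ (Fin N) => u x - u (x - z) := by fun_prop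
      exact (((aux_phi_cont hp).comp h1).add ((aux_phi_cont hp).comp h2)).measurable
    · exact (aux_meas_rpow _).comp measurable_norm
  -- continuity in x for fixed z
  have hF_cont : ∀ z : EuclideanSpace ℝ (Fin N),
      Continuous (fun x : EuclideanSpace ℝ (Fin N) =>
      (|u x - u (x + z)| ^ (p - 2) * (u x - u (x + z)) +
          |u x - u (x - z)| ^ (p - 2) * (u x - u (x - z))) / ‖z‖ ^ ((N : ℝ) + s * p)) := by
    intro z
    apply Continuous.div_const
    have h1 : Continuous fun x : EuclideanSpace ℝ (Fin N) => u x - u (x + z) := by fun_prop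
    have h2 : Continuous fun x : EuclideanSpace ℝ (Fin N) => u x - u (x - z) := by fun_prop
    exact ((aux_phi_cont hp).comp h1).add ((aux_phi_cont hp).comp h2)
  constructor
  · -- continuity
    have hI : Continuous fun x : EuclideanSpace ℝ (Fin N) => ∫ z : EuclideanSpace ℝ (Fin N),
        (|u x - u (x + z)| ^ (p - 2) * (u x - u (x + z)) +
          |u x - u (x - z)| ^ (p - 2) * (u x - u (x - z))) / ‖z‖ ^ ((N : ℝ) + s * p) := by
      rw [continuous_iff_continuousAt]
      intro x₀
      apply continuousAt_of_dominated (bound := g)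
      · exact Filter.Eventually.of_forall hF_meas
      · apply Filter.Eventually.of_forall
        intro x
        apply Filter.Eventually.of_forall
        intro z
        rw [Real.norm_eq_abs]
        exact hFbound x z
      · exact hg_int
      · apply Filter.Eventually.of_forall
        intro z
        exact (hF_cont z).continuousAt
    exact continuous_const.mul hI
  · -- boundedness
    refine ⟨|CNsp N s p * (1 / 2)| * ∫ z : EuclideanSpace ℝ (Fin N), g z, fun x => ?_⟩
    have h1 : |∫ z : EuclideanSpace ℝ (Fin N),
        (|u x - u (x + z)| ^ (p - 2) * (u x - u (x + z)) +
          |u x - u (x - z)| ^ (p - 2) * (u x - u (x - z))) / ‖z‖ ^ ((N : ℝ) + s * p)|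
        ≤ ∫ z : EuclideanSpace ℝ (Fin N), g z := by
      rw [← Real.norm_eq_abs]
      apply norm_integral_le_of_norm_le hg_int
      apply Filter.Eventually.of_forall
      intro z
      rw [Real.norm_eq_abs]
      exact hFbound x z
    calc |fracPLap N s p u x| = |CNsp N s p * (1 / 2)| * |∫ z : EuclideanSpace ℝ (Fin N),
        (|u x - u (x + z)| ^ (p - 2) * (u x - u (x + z)) +
          |u x - u (x - z)| ^ (p - 2) * (u x - u (x - z))) / ‖z‖ ^ ((N : ℝ) + s * p)| := by
          rw [fracPLap, abs_mul]
      _ ≤ |CNsp N s p * (1 / 2)| * ∫ z : EuclideanSpace ℝ (Fin N), g z :=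
          mul_le_mul_of_nonneg_left h1 (abs_nonneg _)
end

section
/- Let N ≥ 1, s ∈ (0,1), p ∈ (1,∞), and let u : ℝ^N → ℝ be bounded with bounded Lipschitz gradient (u ∈ C^{1,1}(ℝ^N)). Fix x ∈ ℝ^N. Then the function z ↦ [ |u(x)−u(x+z)|^{p−2}(u(x)−u(x+z)) + |u(x)−u(x−z)|^{p−2}(u(x)−u(x−z)) ] / |z|^{N+sp} is absolutely integrable on ℝ^N, provided additionally s < 2(p−1)/p when p ∈ (1,2). -/
open MeasureTheory Metric
open scoped ENNReal NNReal

/-! ### Elementary inequalities for `φ(t) = |t|^(p-2) t` -/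

lemma phi_of_nonneg {p : ℝ} (hp : 1 < p) {t : ℝ} (ht : 0 ≤ t) : |t| ^ (p-2) * t = t ^ (p-1) := by
  rcases eq_or_lt_of_le ht with rfl | ht'
  · rw [Real.zero_rpow (by intro h; nlinarith : p - 1 ≠ 0)]; simp
  · rw [abs_of_nonneg ht, ← Real.rpow_add_one (ne_of_gt ht')]
    ring_nf

lemma phi_neg (p t : ℝ) : |(-t)| ^ (p-2) * (-t) = -(|t| ^ (p-2) * t) := by
  rw [abs_neg]; ring

lemma phi_abs {p : ℝ} (hp : 1 < p) (t : ℝ) : |(|t| ^ (p-2) * t)| = |t| ^ (p-1) := by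
  rw [abs_mul, abs_of_nonneg (Real.rpow_nonneg (abs_nonneg t) _),
    ← phi_of_nonneg hp (abs_nonneg t), abs_abs]

lemma phi_mono {p : ℝ} (hp : 1 < p) {a c : ℝ} (hca : c ≤ a) :
    |c| ^ (p-2) * c ≤ |a| ^ (p-2) * a := by
  rcases le_total 0 c with hc | hc
  · rw [phi_of_nonneg hp hc, phi_of_nonneg hp (hc.trans hca)]
    exact Real.rpow_le_rpow hc hca (by linarith)
  · rcases le_total 0 a with ha | ha
    · have h1 : |c| ^ (p-2) * c ≤ 0 :=
        mul_nonpos_of_nonneg_of_nonpos (Real.rpow_nonneg (abs_nonneg c) _) hc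
      have h2 : (0:ℝ) ≤ |a| ^ (p-2) * a :=
        mul_nonneg (Real.rpow_nonneg (abs_nonneg a) _) ha
      linarith
    · have := Real.rpow_le_rpow (neg_nonneg.2 ha) (by linarith : -a ≤ -c)
        (by linarith : (0:ℝ) ≤ p - 1)
      rw [← phi_of_nonneg hp (neg_nonneg.2 ha), ← phi_of_nonneg hp (neg_nonneg.2 hc),
        phi_neg, phi_neg] at this
      linarith

lemma rpow_succ' {p : ℝ} (hp : 1 < p) {a : ℝ} (h0a : 0 ≤ a) : a^(p-1) = a^(p-2)*a := by
  rcases eq_or_lt_of_le h0a with rfl | h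
  · rw [Real.zero_rpow (by intro h; nlinarith : p - 1 ≠ 0)]; simp
  · rw [← Real.rpow_add_one h.ne']; ring_nf

lemma rpow_sub_rpow_le {q u v M : ℝ} (hq : 1 ≤ q) (hv : 0 ≤ v) (hvu : v ≤ u) (huM : u ≤ M) :
    u ^ q - v ^ q ≤ q * M ^ (q-1) * (u - v) := by
  rcases eq_or_lt_of_le (hv.trans hvu) with rfl | hu
  · have hv0 : v = 0 := le_antisymm hvu hv
    simp [hv0]
  have hM : 0 < M := lt_of_lt_of_le hu huM
  have hb := one_add_mul_self_le_rpow_one_add (s := v/u - 1)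
    (by have : 0 ≤ v/u := div_nonneg hv hu.le; linarith) hq
  rw [show (1:ℝ) + (v/u - 1) = v/u by ring] at hb
  have key : u^q * (1 + q * (v/u - 1)) ≤ u^q * (v/u)^q :=
    mul_le_mul_of_nonneg_left hb (Real.rpow_nonneg hu.le q)
  rw [Real.div_rpow hv hu.le] at key
  have huq : (0:ℝ) < u ^ q := Real.rpow_pos_of_pos hu q
  have h1 : u^q * (v^q/u^q) = v^q := by field_simp
  have h2 : u^q * (1 + q*(v/u - 1)) = u^q + q * u^(q-1) * (v - u) := by
    rw [Real.rpow_sub_one hu.ne']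
    field_simp
  have step : u^q - v^q ≤ q * u^(q-1) * (u - v) := by
    rw [h1] at key; rw [h2] at key; linarith
  have hmono : u^(q-1) ≤ M^(q-1) :=
    Real.rpow_le_rpow hu.le huM (by linarith)
  have : q * u^(q-1) * (u-v) ≤ q * M^(q-1) * (u-v) := by
    apply mul_le_mul_of_nonneg_right _ (by linarith)
    exact mul_le_mul_of_nonneg_left hmono (by linarith)
  linarith

lemma phi_diff_le_of_two_le {p M : ℝ} (hp : 2 ≤ p) :
    ∀ a c, |a| ≤ M → |c| ≤ M →
      |(|a|^(p-2)*a) - (|c|^(p-2)*c)| ≤ (p-1) * M^(p-2) * |a - c| := by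
  have hp1 : 1 < p := by linarith
  have aux : ∀ a c, |a| ≤ M → |c| ≤ M → c ≤ a →
      (|a|^(p-2)*a) - (|c|^(p-2)*c) ≤ (p-1) * M^(p-2) * (a - c) := by
    intro a c ha hc hca
    have hM : 0 ≤ M := le_trans (abs_nonneg a) ha
    have hMp : (0:ℝ) ≤ M^(p-2) := Real.rpow_nonneg hM _
    rcases le_total 0 c with h0c | h0c
    · rw [phi_of_nonneg hp1 h0c, phi_of_nonneg hp1 (h0c.trans hca)]
      have key := rpow_sub_rpow_le (q := p-1) (by linarith) h0c hca
        (le_trans (le_abs_self a) ha)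
      rw [show p - 1 - 1 = p - 2 by ring] at key
      linarith
    · rcases le_total 0 a with h0a | h0a
      · have hea : |a|^(p-2)*a = a^(p-1) := phi_of_nonneg hp1 h0a
        have hec : |c|^(p-2)*c = -((-c)^(p-1)) := by
          have h1 := phi_of_nonneg hp1 (show (0:ℝ) ≤ -c by linarith)
          have h2 := phi_neg p c
          linarith
        have ka : a^(p-1) ≤ M^(p-2) * a := by
          rw [rpow_succ' hp1 h0a]
          exact mul_le_mul_of_nonneg_right
            (Real.rpow_le_rpow h0a (le_trans (le_abs_self a) ha) (by linarith)) h0a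
        have kc : (-c)^(p-1) ≤ M^(p-2) * (-c) := by
          rw [rpow_succ' hp1 (show (0:ℝ) ≤ -c by linarith)]
          exact mul_le_mul_of_nonneg_right
            (Real.rpow_le_rpow (by linarith) (by rw [abs_of_nonpos h0c] at hc; linarith)
              (by linarith)) (by linarith)
        nlinarith [mul_nonneg hMp (show (0:ℝ) ≤ a - c by linarith), hp]
      · have hea : |a|^(p-2)*a = -((-a)^(p-1)) := by
          have h1 := phi_of_nonneg hp1 (show (0:ℝ) ≤ -a by linarith)
          have h2 := phi_neg p a
          linarith
        have hec : |c|^(p-2)*c = -((-c)^(p-1)) := by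
          have h1 := phi_of_nonneg hp1 (show (0:ℝ) ≤ -c by linarith)
          have h2 := phi_neg p c
          linarith
        have key := rpow_sub_rpow_le (q := p-1) (v := -a) (u := -c) (M := M)
          (by linarith) (by linarith) (by linarith)
          (by rw [abs_of_nonpos h0c] at hc; linarith)
        rw [show p - 1 - 1 = p - 2 by ring] at key
        have : -c - -a = a - c := by ring
        rw [this] at key
        linarith
  intro a c ha hc
  rcases le_total c a with h | h
  · rw [abs_of_nonneg (sub_nonneg.2 (phi_mono hp1 h)), abs_of_nonneg (sub_nonneg.2 h)]
    exact aux a c ha hc h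
  · rw [abs_sub_comm, abs_sub_comm a c,
      abs_of_nonneg (sub_nonneg.2 (phi_mono hp1 h)), abs_of_nonneg (sub_nonneg.2 h)]
    exact aux c a hc ha h

lemma real_add_rpow_le {a b q : ℝ} (ha : 0 ≤ a) (hb : 0 ≤ b) (hq : 0 ≤ q) (hq1 : q ≤ 1) :
    (a+b)^q ≤ a^q + b^q := by
  have h := NNReal.rpow_add_le_add_rpow a.toNNReal b.toNNReal hq hq1
  have h2 := NNReal.coe_le_coe.2 h
  push_cast at h2
  simpa [Real.coe_toNNReal _ ha, Real.coe_toNNReal _ hb] using h2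

lemma phi_diff_le_of_le_two {p : ℝ} (hp1 : 1 < p) (hp2 : p ≤ 2) :
    ∀ a c : ℝ, |(|a|^(p-2)*a) - (|c|^(p-2)*c)| ≤ 2 * |a - c|^(p-1) := by
  have aux : ∀ a c : ℝ, c ≤ a →
      (|a|^(p-2)*a) - (|c|^(p-2)*c) ≤ 2 * (a - c)^(p-1) := by
    intro a c hca
    have hac : (0:ℝ) ≤ a - c := by linarith
    rcases le_total 0 c with h0c | h0c
    · rw [phi_of_nonneg hp1 h0c, phi_of_nonneg hp1 (h0c.trans hca)]
      have key : a^(p-1) ≤ (a-c)^(p-1) + c^(p-1) := by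
        have := real_add_rpow_le (a := a - c) (b := c) (q := p-1) hac h0c
          (by linarith) (by linarith)
        rwa [sub_add_cancel] at this
      have : (0:ℝ) ≤ (a-c)^(p-1) := Real.rpow_nonneg hac _
      linarith
    · rcases le_total 0 a with h0a | h0a
      · have hea : |a|^(p-2)*a = a^(p-1) := phi_of_nonneg hp1 h0a
        have hec : |c|^(p-2)*c = -((-c)^(p-1)) := by
          have h1 := phi_of_nonneg hp1 (show (0:ℝ) ≤ -c by linarith)
          have h2 := phi_neg p c
          linarith
        have ka : a^(p-1) ≤ (a-c)^(p-1) :=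
          Real.rpow_le_rpow h0a (by linarith) (by linarith)
        have kc : (-c)^(p-1) ≤ (a-c)^(p-1) :=
          Real.rpow_le_rpow (by linarith) (by linarith) (by linarith)
        linarith
      · have hea : |a|^(p-2)*a = -((-a)^(p-1)) := by
          have h1 := phi_of_nonneg hp1 (show (0:ℝ) ≤ -a by linarith)
          have h2 := phi_neg p a
          linarith
        have hec : |c|^(p-2)*c = -((-c)^(p-1)) := by
          have h1 := phi_of_nonneg hp1 (show (0:ℝ) ≤ -c by linarith)
          have h2 := phi_neg p c
          linarith
        have key : (-c)^(p-1) ≤ (a-c)^(p-1) + (-a)^(p-1) := by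
          have := real_add_rpow_le (a := a - c) (b := -a) (q := p-1) hac (by linarith)
            (by linarith) (by linarith)
          rwa [show a - c + -a = -c by ring] at this
        have : (0:ℝ) ≤ (a-c)^(p-1) := Real.rpow_nonneg hac _
        linarith
  intro a c
  rcases le_total c a with h | h
  · rw [abs_of_nonneg (sub_nonneg.2 (phi_mono hp1 h)), abs_of_nonneg (sub_nonneg.2 h)]
    exact aux a c h
  · rw [abs_sub_comm, abs_sub_comm a c,
      abs_of_nonneg (sub_nonneg.2 (phi_mono hp1 h)), abs_of_nonneg (sub_nonneg.2 h)]
    exact aux c a h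

/-! ### Pointwise bounds on the symmetrized integrand numerator -/

lemma near_bound_ge_two {p Mg Kr : ℝ} (hp2 : 2 ≤ p) (hMg0 : 0 ≤ Mg) {A B nz : ℝ}
    (hnz : 0 < nz) (hA : |A| ≤ Mg * nz) (hB : |B| ≤ Mg * nz)
    (hAB : |A + B| ≤ 2*Kr*(nz*nz)) :
    |(|A|^(p-2)*A) + (|B|^(p-2)*B)| ≤ ((p-1)*Mg^(p-2)*(2*Kr)) * nz^p := by
  have hC : |(-B)| ≤ Mg * nz := by rwa [abs_neg]
  have key := phi_diff_le_of_two_le hp2 A (-B) hA hC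
  rw [phi_neg, sub_neg_eq_add, sub_neg_eq_add] at key
  have hzz : nz^(p-2) * (nz*nz) = nz^p := by
    rw [show nz*nz = nz^((2:ℕ):ℝ) by rw [Real.rpow_natCast]; ring,
      ← Real.rpow_add hnz]
    norm_num
  calc |(|A|^(p-2)*A) + (|B|^(p-2)*B)| ≤ (p-1) * (Mg*nz)^(p-2) * |A + B| := key
    _ ≤ (p-1) * (Mg*nz)^(p-2) * (2*Kr*(nz*nz)) := by
        apply mul_le_mul_of_nonneg_left hAB
        have : (0:ℝ) ≤ (Mg*nz)^(p-2) := Real.rpow_nonneg (by positivity) _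
        nlinarith
    _ = ((p-1)*Mg^(p-2)*(2*Kr)) * (nz^(p-2)*(nz*nz)) := by
        rw [Real.mul_rpow hMg0 hnz.le]; ring
    _ = ((p-1)*Mg^(p-2)*(2*Kr)) * nz^p := by rw [hzz]

lemma near_bound_lt_two {p Kr : ℝ} (hp1 : 1 < p) (hp2 : p ≤ 2) (hK0 : 0 ≤ Kr) {A B nz : ℝ}
    (hnz : 0 ≤ nz) (hAB : |A + B| ≤ 2*Kr*(nz*nz)) :
    |(|A|^(p-2)*A) + (|B|^(p-2)*B)| ≤ (2*(2*Kr)^(p-1)) * nz^(2*(p-1)) := by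
  have key := phi_diff_le_of_le_two hp1 hp2 A (-B)
  rw [phi_neg, sub_neg_eq_add, sub_neg_eq_add] at key
  have h1 : |A + B|^(p-1) ≤ (2*Kr*(nz*nz))^(p-1) :=
    Real.rpow_le_rpow (abs_nonneg _) hAB (by linarith)
  have h2 : (2*Kr*(nz*nz))^(p-1) = (2*Kr)^(p-1) * (nz*nz)^(p-1) :=
    Real.mul_rpow (by positivity) (by positivity)
  have h3 : (nz*nz)^(p-1) = nz^(2*(p-1)) := by
    rw [show nz*nz = nz^((2:ℕ):ℝ) by rw [Real.rpow_natCast]; ring,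
      ← Real.rpow_mul hnz]
    norm_num
  calc |(|A|^(p-2)*A) + (|B|^(p-2)*B)| ≤ 2 * |A + B|^(p-1) := key
    _ ≤ 2 * ((2*Kr)^(p-1) * (nz*nz)^(p-1)) := by rw [← h2]; linarith
    _ = (2*(2*Kr)^(p-1)) * nz^(2*(p-1)) := by rw [h3]; ring

/-! ### Integrability of radial power kernels -/

lemma integrableOn_rpow_norm_ball (N : ℕ) (hN : 1 ≤ N) (t : ℝ) (ht : -(N:ℝ) < t) :
    IntegrableOn (fun z : EuclideanSpace ℝ (Fin N) => ‖z‖ ^ t) (ball 0 1) volume := by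
  haveI : Nontrivial (EuclideanSpace ℝ (Fin N)) := by
    have h : 0 < Module.finrank ℝ (EuclideanSpace ℝ (Fin N)) := by
      rw [finrank_euclideanSpace_fin]; omega
    exact Module.nontrivial_of_finrank_pos h
  have hm : Measurable (fun z : EuclideanSpace ℝ (Fin N) => ‖z‖ ^ t) := by fun_prop
  rcases le_or_gt 0 t with ht0 | ht0
  · apply Measure.integrableOn_of_bounded (M := 1) measure_ball_lt_top.ne hm.aestronglyMeasurable
    filter_upwards [ae_restrict_mem measurableSet_ball] with z hz
    rw [Real.norm_eq_abs, abs_of_nonneg (Real.rpow_nonneg (norm_nonneg _) _)]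
    exact Real.rpow_le_one (norm_nonneg _) (le_of_lt (mem_ball_zero_iff.1 hz)) ht0
  · refine ⟨hm.aestronglyMeasurable.restrict, ?_⟩
    rw [hasFiniteIntegral_iff_norm]
    set A : ℕ → Set (EuclideanSpace ℝ (Fin N)) :=
      fun k => ball 0 ((1/2:ℝ)^k) \ ball 0 ((1/2:ℝ)^(k+1)) with hA
    have hcover : ball (0 : EuclideanSpace ℝ (Fin N)) 1 ⊆ {0} ∪ ⋃ k, A k := by
      intro z hz
      by_cases hz0 : z = 0
      · exact Or.inl hz0
      · right
        have hzpos : 0 < ‖z‖ := norm_pos_iff.2 hz0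
        have hz1 : ‖z‖ < 1 := mem_ball_zero_iff.1 hz
        have hex : ∃ n, (1/2:ℝ)^n ≤ ‖z‖ := by
          obtain ⟨n, hn⟩ := exists_pow_lt_of_lt_one hzpos (by norm_num : (1/2:ℝ) < 1)
          exact ⟨n, hn.le⟩
        have hn := Nat.find_spec hex
        set n := Nat.find hex with hndef
        have hn0 : n ≠ 0 := by
          intro h
          rw [h, pow_zero] at hn; linarith
        refine Set.mem_iUnion.2 ⟨n - 1, ?_, ?_⟩
        · have := Nat.find_min hex (m := n - 1) (by omega)
          simp only [not_le] at this
          exact mem_ball_zero_iff.2 this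
        · show ¬ _
          intro hmem
          have := mem_ball_zero_iff.1 hmem
          rw [show n - 1 + 1 = n by omega] at this
          linarith
    calc ∫⁻ z in ball (0:EuclideanSpace ℝ (Fin N)) 1, ENNReal.ofReal ‖‖z‖ ^ t‖
        ≤ ∫⁻ z in ({0} ∪ ⋃ k, A k : Set (EuclideanSpace ℝ (Fin N))),
            ENNReal.ofReal ‖‖z‖ ^ t‖ := lintegral_mono_set hcover
      _ ≤ (∫⁻ z in ({0} : Set (EuclideanSpace ℝ (Fin N))), ENNReal.ofReal ‖‖z‖ ^ t‖)
            + ∫⁻ z in (⋃ k, A k), ENNReal.ofReal ‖‖z‖ ^ t‖ := lintegral_union_le _ _ _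
      _ ≤ 0 + ∑' k, ∫⁻ z in A k, ENNReal.ofReal ‖‖z‖ ^ t‖ := by
          gcongr
          · rw [setLIntegral_measure_zero _ _ (measure_singleton 0)]
          · exact lintegral_iUnion_le _ _
      _ < ⊤ := by
          rw [zero_add]
          set B := volume (ball (0:EuclideanSpace ℝ (Fin N)) 1) with hBdef
          have hB : B < ⊤ := measure_ball_lt_top
          have htN : (0:ℝ) < t + N := by linarith
          set q : ℝ≥0∞ := ENNReal.ofReal ((1/2:ℝ)^(t+(N:ℝ))) with hqdef
          set C : ℝ≥0∞ := ENNReal.ofReal ((1/2:ℝ)^t) * B with hCdef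
          have hkey : ∀ k : ℕ, ((1/2:ℝ)^(k+1))^t * ((1/2:ℝ)^k)^(N:ℕ)
              = (1/2:ℝ)^t * ((1/2:ℝ)^(t+(N:ℝ)))^k := by
            intro k
            have h2 : (0:ℝ) ≤ 1/2 := by norm_num
            rw [← Real.rpow_natCast ((1/2:ℝ)) (k+1), ← Real.rpow_natCast ((1/2:ℝ)) k,
              ← Real.rpow_natCast ((1/2:ℝ)^(t+(N:ℝ))) k,
              ← Real.rpow_mul h2, ← Real.rpow_natCast ((1/2:ℝ)^(((k:ℕ)):ℝ)) N,
              ← Real.rpow_mul h2, ← Real.rpow_mul h2,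
              ← Real.rpow_add (by norm_num : (0:ℝ) < 1/2),
              ← Real.rpow_add (by norm_num : (0:ℝ) < 1/2)]
            congr 1
            push_cast
            ring
          have hterm : ∀ k : ℕ, (∫⁻ z in A k, ENNReal.ofReal ‖‖z‖ ^ t‖) ≤ C * q ^ k := by
            intro k
            have hrk : (0:ℝ) < (1/2:ℝ)^(k+1) := by positivity
            have hAm : MeasurableSet (A k) := measurableSet_ball.diff measurableSet_ball
            calc ∫⁻ z in A k, ENNReal.ofReal ‖‖z‖ ^ t‖
                ≤ ∫⁻ _ in A k, ENNReal.ofReal (((1/2:ℝ)^(k+1))^t) := by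
                  apply setLIntegral_mono' hAm
                  intro z hz
                  have h1 : (1/2:ℝ)^(k+1) ≤ ‖z‖ := by
                    have := hz.2
                    rw [mem_ball_zero_iff] at this
                    exact not_lt.1 this
                  rw [Real.norm_eq_abs, abs_of_nonneg (Real.rpow_nonneg (norm_nonneg _) _)]
                  exact ENNReal.ofReal_le_ofReal
                    (Real.rpow_le_rpow_of_nonpos hrk h1 ht0.le)
              _ = ENNReal.ofReal (((1/2:ℝ)^(k+1))^t) * volume (A k) :=
                  setLIntegral_const _ _
              _ ≤ ENNReal.ofReal (((1/2:ℝ)^(k+1))^t)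
                    * (ENNReal.ofReal (((1/2:ℝ)^k)^(N:ℕ)) * B) := by
                  gcongr
                  calc volume (A k) ≤ volume (ball (0:EuclideanSpace ℝ (Fin N)) ((1/2:ℝ)^k)) :=
                        measure_mono Set.diff_subset
                    _ = ENNReal.ofReal (((1/2:ℝ)^k)^(N:ℕ)) * B := by
                        rw [Measure.addHaar_ball volume _ (by positivity : (0:ℝ) ≤ (1/2:ℝ)^k),
                          finrank_euclideanSpace_fin]
              _ = C * q ^ k := by
                  rw [← mul_assoc, ← ENNReal.ofReal_mul (Real.rpow_nonneg hrk.le _), hkey k,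
                    ENNReal.ofReal_mul (Real.rpow_nonneg (by norm_num : (0:ℝ) ≤ (1/2:ℝ)) _),
                    ENNReal.ofReal_pow (Real.rpow_nonneg (by norm_num : (0:ℝ) ≤ 1/2) _)]
                  ring
          calc ∑' k, ∫⁻ z in A k, ENNReal.ofReal ‖‖z‖ ^ t‖
              ≤ ∑' k, C * q ^ k := ENNReal.tsum_le_tsum hterm
            _ = C * ∑' k, q ^ k := ENNReal.tsum_mul_left
            _ < ⊤ := by
                rw [ENNReal.tsum_geometric]
                have hq1 : q < 1 := by
                  rw [hqdef]
                  exact ENNReal.ofReal_lt_one.2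
                    (Real.rpow_lt_one (by norm_num) (by norm_num) htN)
                refine ENNReal.mul_lt_top (ENNReal.mul_lt_top ENNReal.ofReal_lt_top hB) ?_
                exact ENNReal.inv_lt_top.2 (tsub_pos_of_lt hq1)

lemma integrableOn_rpow_norm_compl_ball (N : ℕ) (r : ℝ) (hr : (N:ℝ) < r) :
    IntegrableOn (fun z : EuclideanSpace ℝ (Fin N) => ‖z‖ ^ (-r))
      ((ball (0:EuclideanSpace ℝ (Fin N)) 1)ᶜ) volume := by
  have hm : Measurable (fun z : EuclideanSpace ℝ (Fin N) => ‖z‖ ^ (-r)) := by fun_prop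
  have base : Integrable (fun z : EuclideanSpace ℝ (Fin N) => (2:ℝ)^r * (1 + ‖z‖) ^ (-r))
      volume := by
    apply Integrable.const_mul
    exact integrable_one_add_norm (by rwa [finrank_euclideanSpace_fin])
  apply (base.integrableOn).mono' hm.aestronglyMeasurable.restrict
  filter_upwards [ae_restrict_mem measurableSet_ball.compl] with z hz
  have hz1 : 1 ≤ ‖z‖ := by
    have := hz
    simp only [Set.mem_compl_iff, mem_ball_zero_iff, not_lt] at this
    exact this
  rw [Real.norm_eq_abs, abs_of_nonneg (Real.rpow_nonneg (norm_nonneg _) _)]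
  have h1 : (2*‖z‖)^(-r) = (2:ℝ)^(-r) * ‖z‖^(-r) :=
    Real.mul_rpow (by norm_num) (norm_nonneg z)
  have h2 : (2*‖z‖)^(-r) ≤ (1+‖z‖)^(-r) :=
    Real.rpow_le_rpow_of_nonpos (by positivity) (by linarith) (by linarith)
  have h3 : (2:ℝ)^r * (2:ℝ)^(-r) = 1 := by
    rw [← Real.rpow_add (by norm_num : (0:ℝ) < 2)]; simp
  calc ‖z‖^(-r) = (2:ℝ)^r * ((2*‖z‖)^(-r)) := by rw [h1, ← mul_assoc, h3, one_mul]
    _ ≤ (2:ℝ)^r * (1+‖z‖)^(-r) := by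
        apply mul_le_mul_of_nonneg_left h2 (Real.rpow_nonneg (by norm_num) _)

/-- Absolute integrability on `ℝ^N` of the symmetrized fractional `p`-Laplacian
integrand for `u ∈ C^{1,1}(ℝ^N)` (assuming in addition `s < 2(p-1)/p` when `p < 2`). -/
theorem symmetrized_integrand_integrable
    (N : ℕ) (hN : 1 ≤ N) (s p : ℝ) (hs : s ∈ Set.Ioo (0 : ℝ) 1) (hp : 1 < p)
    (hsp : p < 2 → s < 2 * (p - 1) / p)
    (u : EuclideanSpace ℝ (Fin N) → ℝ)
    (hu : ContDiff ℝ 1 u)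
    (Mu : ℝ) (hMu : ∀ x, |u x| ≤ Mu)
    (Mg : ℝ) (hMg : ∀ x, ‖gradient u x‖ ≤ Mg)
    (K : NNReal) (hK : LipschitzWith K (gradient u))
    (x : EuclideanSpace ℝ (Fin N)) :
    Integrable
      (fun z : EuclideanSpace ℝ (Fin N) =>
        (|u x - u (x + z)| ^ (p - 2) * (u x - u (x + z)) +
            |u x - u (x - z)| ^ (p - 2) * (u x - u (x - z))) / ‖z‖ ^ ((N : ℝ) + s * p))
      volume := by
  obtain ⟨hs0, hs1⟩ := hs
  have hp0 : 0 < p := by linarith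
  have hMg0 : 0 ≤ Mg := le_trans (norm_nonneg _) (hMg x)
  have hMu0 : 0 ≤ Mu := le_trans (abs_nonneg _) (hMu x)
  set r : ℝ := (N:ℝ) + s * p with hrdef
  have hNr : (N:ℝ) < r := by nlinarith
  have hrpos : 0 < r := lt_of_le_of_lt (by positivity) hNr
  -- fderiv facts
  have hfd : ∀ y, fderiv ℝ u y = (InnerProductSpace.toDual ℝ _) (gradient u y) := by
    intro y
    exact ((InnerProductSpace.toDual ℝ _).apply_symm_apply _).symm
  have hDb : ∀ y, ‖fderiv ℝ u y‖ ≤ Mg := by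
    intro y
    rw [hfd y, (InnerProductSpace.toDual ℝ _).norm_map]
    exact hMg y
  have hlip : LipschitzWith K (fderiv ℝ u) := by
    have heq : fderiv ℝ u = fun y => (InnerProductSpace.toDual ℝ _) (gradient u y) :=
      funext hfd
    rw [heq]
    simpa using (InnerProductSpace.toDual ℝ (EuclideanSpace ℝ (Fin N))).lipschitz.comp hK
  have hdiffu : Differentiable ℝ u := hu.differentiable one_ne_zero
  -- first-order bound
  have hub : ∀ y : EuclideanSpace ℝ (Fin N), |u x - u y| ≤ Mg * ‖x - y‖ := by
    intro y
    have := convex_univ.norm_image_sub_le_of_norm_fderiv_le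
      (fun w _ => hdiffu w) (fun w _ => hDb w) (Set.mem_univ y) (Set.mem_univ x)
    rwa [Real.norm_eq_abs] at this
  have hubp : ∀ z : EuclideanSpace ℝ (Fin N), |u x - u (x + z)| ≤ Mg * ‖z‖ := by
    intro z
    have := hub (x + z)
    rwa [show x - (x + z) = -z by abel, norm_neg] at this
  have hubm : ∀ z : EuclideanSpace ℝ (Fin N), |u x - u (x - z)| ≤ Mg * ‖z‖ := by
    intro z
    have := hub (x - z)
    rwa [show x - (x - z) = z by abel] at this
  -- second-order bound
  have hsecond : ∀ z : EuclideanSpace ℝ (Fin N),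
      |(u x - u (x+z)) + (u x - u (x-z))| ≤ 2*(K:ℝ)*(‖z‖*‖z‖) := by
    intro z
    set D := fderiv ℝ u x with hD
    have hconv : Convex ℝ (closedBall x ‖z‖) := convex_closedBall x ‖z‖
    have hder : ∀ w ∈ closedBall x ‖z‖,
        HasFDerivWithinAt u (fderiv ℝ u w) (closedBall x ‖z‖) w :=
      fun w _ => (hdiffu w).hasFDerivAt.hasFDerivWithinAt
    have hbound : ∀ w ∈ closedBall x ‖z‖, ‖fderiv ℝ u w - D‖ ≤ (K:ℝ) * ‖z‖ := by
      intro w hw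
      have h1 := hlip.dist_le_mul w x
      rw [dist_eq_norm] at h1
      have h2 : dist w x ≤ ‖z‖ := mem_closedBall.1 hw
      calc ‖fderiv ℝ u w - D‖ ≤ (K:ℝ) * dist w x := h1
        _ ≤ (K:ℝ) * ‖z‖ := by gcongr
    have hx0 : x ∈ closedBall x ‖z‖ := mem_closedBall_self (norm_nonneg z)
    have hy1 : x + z ∈ closedBall x ‖z‖ := by
      rw [mem_closedBall, dist_eq_norm]; simp
    have hy2 : x - z ∈ closedBall x ‖z‖ := by
      rw [mem_closedBall, dist_eq_norm]; simp
    have e1 := hconv.norm_image_sub_le_of_norm_hasFDerivWithin_le' hder hbound hx0 hy1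
    have e2 := hconv.norm_image_sub_le_of_norm_hasFDerivWithin_le' hder hbound hx0 hy2
    rw [add_sub_cancel_left] at e1
    rw [show x - z - x = -z by abel, map_neg, norm_neg] at e2
    rw [Real.norm_eq_abs] at e1 e2
    have hsplit : (u x - u (x+z)) + (u x - u (x-z))
        = -((u (x+z) - u x - D z) + (u (x-z) - u x - (- D z))) := by ring
    rw [hsplit, abs_neg]
    calc |(u (x+z) - u x - D z) + (u (x-z) - u x - (- D z))|
        ≤ |u (x+z) - u x - D z| + |u (x-z) - u x - (- D z)| := abs_add_le _ _
      _ ≤ (K:ℝ)*‖z‖*‖z‖ + (K:ℝ)*‖z‖*‖z‖ := add_le_add e1 e2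
      _ = 2*(K:ℝ)*(‖z‖*‖z‖) := by ring
  -- global (far-field) bound on the numerator
  have habs2 : ∀ y, |u x - u y| ≤ 2 * Mu := by
    intro y
    calc |u x - u y| = |u x + -(u y)| := by rw [sub_eq_add_neg]
      _ ≤ |u x| + |(-(u y))| := abs_add_le _ _
      _ ≤ Mu + Mu := by rw [abs_neg]; exact add_le_add (hMu x) (hMu y)
      _ = 2 * Mu := by ring
  have hfarb : ∀ z : EuclideanSpace ℝ (Fin N),
      |(|u x - u (x + z)| ^ (p - 2) * (u x - u (x + z)) +
          |u x - u (x - z)| ^ (p - 2) * (u x - u (x - z)))| ≤ 2 * (2*Mu)^(p-1) := by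
    intro z
    calc |(|u x - u (x + z)| ^ (p - 2) * (u x - u (x + z)) +
          |u x - u (x - z)| ^ (p - 2) * (u x - u (x - z)))|
        ≤ |(|u x - u (x + z)| ^ (p - 2) * (u x - u (x + z)))|
          + |(|u x - u (x - z)| ^ (p - 2) * (u x - u (x - z)))| := abs_add_le _ _
      _ = |u x - u (x + z)|^(p-1) + |u x - u (x - z)|^(p-1) := by
          rw [phi_abs hp, phi_abs hp]
      _ ≤ (2*Mu)^(p-1) + (2*Mu)^(p-1) :=
          add_le_add
            (Real.rpow_le_rpow (abs_nonneg _) (habs2 _) (by linarith))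
            (Real.rpow_le_rpow (abs_nonneg _) (habs2 _) (by linarith))
      _ = 2 * (2*Mu)^(p-1) := by ring
  -- near-origin bound on the numerator
  obtain ⟨β, C1, hβgt, hC1, hnear⟩ : ∃ β C1, s*p < β ∧ 0 ≤ C1 ∧
      ∀ z : EuclideanSpace ℝ (Fin N),
        |(|u x - u (x + z)| ^ (p - 2) * (u x - u (x + z)) +
            |u x - u (x - z)| ^ (p - 2) * (u x - u (x - z)))| ≤ C1 * ‖z‖^β := by
    rcases le_or_gt 2 p with hp2 | hp2
    · refine ⟨p, (p-1)*Mg^(p-2)*(2*(K:ℝ)), by nlinarith,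
        mul_nonneg (mul_nonneg (by linarith) (Real.rpow_nonneg hMg0 _)) (by positivity), ?_⟩
      intro z
      by_cases hz0 : z = 0
      · subst hz0
        have h0 : |u x - u (x + 0)| ^ (p - 2) * (u x - u (x + 0)) +
            |u x - u (x - 0)| ^ (p - 2) * (u x - u (x - 0)) = 0 := by
          simp
        rw [h0, abs_zero]
        exact mul_nonneg (mul_nonneg (mul_nonneg (by linarith) (Real.rpow_nonneg hMg0 _))
          (by positivity)) (Real.rpow_nonneg (norm_nonneg _) _)
      · exact near_bound_ge_two hp2 hMg0 (norm_pos_iff.2 hz0) (hubp z) (hubm z) (hsecond z)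
    · refine ⟨2*(p-1), 2*(2*(2*(K:ℝ)))^(p-1), ?_,
        mul_nonneg (by norm_num) (Real.rpow_nonneg (by positivity) _), ?_⟩
      · have := hsp hp2
        have h2 : s * p < 2*(p-1) := by
          rw [lt_div_iff₀ hp0] at this
          linarith
        exact h2
      · intro z
        have := near_bound_lt_two hp (le_of_lt hp2) (by positivity : (0:ℝ) ≤ 2*(K:ℝ))
          (norm_nonneg z) (by
            have := hsecond z
            calc |(u x - u (x + z)) + (u x - u (x - z))| ≤ 2*(K:ℝ)*(‖z‖*‖z‖) := this
              _ = 2*(2*(K:ℝ))*(‖z‖*‖z‖)/2 := by ring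
              _ ≤ 2*(2*(K:ℝ))*(‖z‖*‖z‖) := by
                  have : (0:ℝ) ≤ 2*(2*(K:ℝ))*(‖z‖*‖z‖) := by positivity
                  linarith)
        exact this
  -- measurability
  have hφm : Measurable (fun t : ℝ => |t| ^ (p-2) * t) := by fun_prop
  have hcu : Continuous u := hu.continuous
  have m1 : Measurable fun z : EuclideanSpace ℝ (Fin N) => u x - u (x + z) :=
    ((hcu.comp (continuous_const.add continuous_id)).measurable).const_sub _
  have m2 : Measurable fun z : EuclideanSpace ℝ (Fin N) => u x - u (x - z) :=
    ((hcu.comp (continuous_const.sub continuous_id)).measurable).const_sub _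
  have hden : Measurable fun z : EuclideanSpace ℝ (Fin N) => ‖z‖ ^ r := by fun_prop
  have hmeasf : Measurable
      (fun z : EuclideanSpace ℝ (Fin N) =>
        (|u x - u (x + z)| ^ (p - 2) * (u x - u (x + z)) +
            |u x - u (x - z)| ^ (p - 2) * (u x - u (x - z))) / ‖z‖ ^ r) :=
    (((hφm.comp m1).add (hφm.comp m2)).div hden)
  -- integrable near the origin
  have hIball : IntegrableOn
      (fun z : EuclideanSpace ℝ (Fin N) =>
        (|u x - u (x + z)| ^ (p - 2) * (u x - u (x + z)) +
            |u x - u (x - z)| ^ (p - 2) * (u x - u (x - z))) / ‖z‖ ^ r)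
      (ball 0 1) volume := by
    have hker := (integrableOn_rpow_norm_ball N hN (β - r) (by
      rw [hrdef]; linarith)).const_mul C1
    apply hker.mono' hmeasf.aestronglyMeasurable.restrict
    apply Filter.Eventually.of_forall
    intro z
    by_cases hz0 : z = 0
    · subst hz0
      rw [norm_zero, Real.zero_rpow hrpos.ne', div_zero, norm_zero]
      exact mul_nonneg hC1 (Real.rpow_nonneg le_rfl _)
    · have hzpos : 0 < ‖z‖ := norm_pos_iff.2 hz0
      have hdpos : 0 < ‖z‖ ^ r := Real.rpow_pos_of_pos hzpos r
      rw [Real.norm_eq_abs, abs_div, abs_of_pos hdpos, div_le_iff₀ hdpos]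
      calc |(|u x - u (x + z)| ^ (p - 2) * (u x - u (x + z)) +
            |u x - u (x - z)| ^ (p - 2) * (u x - u (x - z)))|
          ≤ C1 * ‖z‖^β := hnear z
        _ = C1 * ‖z‖^(β - r) * ‖z‖^r := by
            rw [mul_assoc, ← Real.rpow_add hzpos]
            ring_nf
  -- integrable away from the origin
  have hIcompl : IntegrableOn
      (fun z : EuclideanSpace ℝ (Fin N) =>
        (|u x - u (x + z)| ^ (p - 2) * (u x - u (x + z)) +
            |u x - u (x - z)| ^ (p - 2) * (u x - u (x - z))) / ‖z‖ ^ r)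
      ((ball 0 1)ᶜ) volume := by
    have hker := (integrableOn_rpow_norm_compl_ball N r hNr).const_mul (2 * (2*Mu)^(p-1))
    apply hker.mono' hmeasf.aestronglyMeasurable.restrict
    filter_upwards [ae_restrict_mem measurableSet_ball.compl] with z hz
    have hz1 : 1 ≤ ‖z‖ := by
      simp only [Set.mem_compl_iff, mem_ball_zero_iff, not_lt] at hz
      exact hz
    have hzpos : 0 < ‖z‖ := by linarith
    have hdpos : 0 < ‖z‖ ^ r := Real.rpow_pos_of_pos hzpos r
    rw [Real.norm_eq_abs, abs_div, abs_of_pos hdpos, div_le_iff₀ hdpos]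
    calc |(|u x - u (x + z)| ^ (p - 2) * (u x - u (x + z)) +
          |u x - u (x - z)| ^ (p - 2) * (u x - u (x - z)))|
        ≤ 2 * (2*Mu)^(p-1) := hfarb z
      _ = 2 * (2*Mu)^(p-1) * (‖z‖^(-r) * ‖z‖^r) := by
          rw [← Real.rpow_add hzpos]
          simp
      _ = 2 * (2*Mu)^(p-1) * ‖z‖^(-r) * ‖z‖^r := by ring
  have hunion := hIball.union hIcompl
  rw [Set.union_compl_self] at hunion
  exact integrableOn_univ.mp hunion
end
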